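/- Let X, Y be real Banach spaces, U ⊆ X an open star-shaped (with respect to 0) subset, A : U → Y real analytic, and f ∈ L¹([0,1]). Then for every w ∈ U the map τ ↦ f(τ) A(τw) is Pettis integrable over [0,1], and the map from U to Y taking w to ∫₀¹ f(τ) A(τw) dτ is real analytic. -/

import Mathlib

open MeasureTheory

open scoped NNReal ENNReal

/-- Uniform bound for the coefficients of `changeOrigin` over a half-radius ball. -/
private lemma changeOrigin_uniform_bound {𝕜 E F : Type*} [NontriviallyNormedField 𝕜]
    [NormedAddCommGroup E] [NormedSpace 𝕜 E] [NormedAddCommGroup F] [NormedSpace 𝕜 F]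
    (p : FormalMultilinearSeries 𝕜 E F) (r : ℝ≥0) (hr : (r : ℝ≥0∞) < p.radius) :
    ∃ C : ℝ≥0, ∀ z : E, ‖z‖₊ ≤ r / 2 → ∀ n : ℕ,
      ‖p.changeOrigin z n‖₊ * (r / 2) ^ n ≤ C := by
  have hradd : ((r / 2 + r / 2 : ℝ≥0) : ℝ≥0∞) < p.radius := by
    rwa [add_halves]
  rw [ENNReal.coe_add] at hradd
  have hsum := p.changeOriginSeries_summable_aux₁ hradd
  obtain ⟨hs1, hs2⟩ := NNReal.summable_sigma.1 hsum
  have hhalf : ((r / 2 : ℝ≥0) : ℝ≥0∞) < p.radius :=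
    lt_of_le_of_lt (by exact_mod_cast NNReal.half_le_self r) hr
  refine ⟨∑' k : ℕ, ∑' s : Σ l : ℕ, { s : Finset (Fin (k + l)) // s.card = l },
      ‖p (k + s.1)‖₊ * (r / 2) ^ s.1 * (r / 2) ^ k, fun z hz n => ?_⟩
  have hz' : (‖z‖₊ : ℝ≥0∞) < p.radius :=
    lt_of_le_of_lt (by exact_mod_cast hz) hhalf
  have h1 : ‖p.changeOrigin z n‖₊ ≤
      ∑' s : Σ l : ℕ, { s : Finset (Fin (n + l)) // s.card = l },
        ‖p (n + s.1)‖₊ * (r / 2) ^ s.1 := by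
    refine (p.nnnorm_changeOrigin_le n hz').trans ?_
    refine Summable.tsum_le_tsum (fun s => ?_) ?_ (p.changeOriginSeries_summable_aux₂ hhalf n)
    · exact mul_le_mul_right (pow_le_pow_left' hz _) _
    · refine NNReal.summable_of_le (fun s => ?_) (p.changeOriginSeries_summable_aux₂ hhalf n)
      exact mul_le_mul_right (pow_le_pow_left' hz _) _
  calc ‖p.changeOrigin z n‖₊ * (r / 2) ^ n
      ≤ (∑' s : Σ l : ℕ, { s : Finset (Fin (n + l)) // s.card = l },
          ‖p (n + s.1)‖₊ * (r / 2) ^ s.1) * (r / 2) ^ n := mul_le_mul_left h1 _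
    _ = ∑' s : Σ l : ℕ, { s : Finset (Fin (n + l)) // s.card = l },
          ‖p (n + s.1)‖₊ * (r / 2) ^ s.1 * (r / 2) ^ n := by
        rw [NNReal.tsum_mul_right]
    _ ≤ _ := hs2.le_tsum' n
/-- Theorem 9.3: for `U ⊆ X` open and star-shaped with respect to `0`,
`A : U → Y` real analytic and `f ∈ L¹([0,1])`, the Pettis integral
`Φ(w) = ∫₀¹ f(τ) A(τw) dτ` exists for every `w ∈ U` and `Φ` is real analytic on `U`. -/
theorem pettis_integral_analytic {X Y : Type*} [NormedAddCommGroup X] [NormedSpace ℝ X]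
    [NormedAddCommGroup Y] [NormedSpace ℝ Y] [CompleteSpace Y]
    (U : Set X) (hU : IsOpen U)
    (hstar : ∀ w ∈ U, ∀ τ ∈ Set.Icc (0:ℝ) 1, τ • w ∈ U)
    (A : X → Y) (hA : AnalyticOnNhd ℝ A U)
    (f : ℝ → ℝ) (hf : IntervalIntegrable f volume 0 1) :
    ∃ Φ : X → Y,
      (∀ w ∈ U, ∀ L : Y →L[ℝ] ℝ, L (Φ w) = ∫ τ in (0:ℝ)..1, f τ * L (A (τ • w))) ∧
      AnalyticOnNhd ℝ Φ U := by
  classical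
  have hf1 : IntegrableOn f (Set.Ioc (0:ℝ) 1) volume := hf.1
  set Φ : X → Y := fun w => ∫ τ in Set.Ioc (0:ℝ) 1, f τ • A (τ • w) with hΦ
  -- integrability of the integrand for `w ∈ U`
  have hInt : ∀ w ∈ U, IntegrableOn (fun τ => f τ • A (τ • w)) (Set.Ioc (0:ℝ) 1) volume := by
    intro w hw
    have hg : ContinuousOn (fun τ : ℝ => A (τ • w)) (Set.Icc 0 1) := by
      refine hA.continuousOn.comp ((continuous_id.smul continuous_const).continuousOn) ?_
      intro τ hτ
      exact hstar w hw τ hτ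
    obtain ⟨M, hM⟩ := (isCompact_Icc).exists_bound_of_continuousOn hg
    refine Integrable.mono' ((hf1.norm.const_mul M)) ?_ ?_
    · exact hf1.1.smul ((hg.mono Set.Ioc_subset_Icc_self).aestronglyMeasurable measurableSet_Ioc)
    · filter_upwards [ae_restrict_mem measurableSet_Ioc] with τ hτ
      simp only [norm_smul]
      calc ‖f τ‖ * ‖A (τ • w)‖ ≤ ‖f τ‖ * M :=
            mul_le_mul_of_nonneg_left (hM τ (Set.Ioc_subset_Icc_self hτ)) (norm_nonneg _)
        _ = M * ‖f τ‖ := mul_comm _ _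
  refine ⟨Φ, ?_, ?_⟩
  · -- Pettis integral property
    intro w hw L
    rw [intervalIntegral.integral_of_le zero_le_one, hΦ,
      ← ContinuousLinearMap.integral_comp_comm L (hInt w hw)]
    simp [smul_eq_mul]
  · -- analyticity
    intro w₀ hw₀
    -- local power series with quantitative bounds along the segment
    have hK : ∀ τ ∈ Set.Icc (0:ℝ) 1, ∃ (p : FormalMultilinearSeries ℝ X Y) (r : ℝ≥0),
        0 < r ∧ (r : ℝ≥0∞) < p.radius ∧ HasFPowerSeriesOnBall A p (τ • w₀) r := by
      intro τ hτ
      obtain ⟨p, hp⟩ := hA _ (hstar w₀ hw₀ τ hτ)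
      obtain ⟨R, hR⟩ := hp
      obtain ⟨r, hr0, hrR⟩ := ENNReal.lt_iff_exists_nnreal_btwn.1 hR.r_pos
      have hr0' : 0 < r := by exact_mod_cast hr0
      exact ⟨p, r, hr0', lt_of_lt_of_le hrR hR.r_le,
        hR.mono (by exact_mod_cast hr0) hrR.le⟩
    choose P R hR0 hRrad hRball using hK
    -- the open cover of [0,1]
    set ι := {τ : ℝ // τ ∈ Set.Icc (0:ℝ) 1} with hι
    set V : ι → Set ℝ := fun i =>
      (fun σ : ℝ => σ • w₀) ⁻¹' Metric.ball ((i : ℝ) • w₀) ((R i i.2 : ℝ) / 2) with hV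
    have hVopen : ∀ i, IsOpen (V i) :=
      fun i => (Metric.isOpen_ball).preimage (continuous_id.smul continuous_const)
    have hVcover : Set.Icc (0:ℝ) 1 ⊆ ⋃ i, V i := by
      intro τ hτ
      refine Set.mem_iUnion.2 ⟨⟨τ, hτ⟩, ?_⟩
      simp only [hV, Set.mem_preimage, Metric.mem_ball, dist_self]
      have := hR0 τ hτ
      positivity
    obtain ⟨t, ht⟩ := (isCompact_Icc).elim_finite_subcover V hVopen hVcover
    have htne : t.Nonempty := by
      have h0 : (0:ℝ) ∈ Set.Icc (0:ℝ) 1 := by norm_num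
      obtain ⟨i, hi, -⟩ := Set.mem_iUnion₂.1 (ht h0)
      exact ⟨i, hi⟩
    -- key on each `V i`: membership gives distance control
    have hVmem : ∀ i, ∀ τ ∈ V i, ‖τ • w₀ - (i : ℝ) • w₀‖₊ ≤ R i i.2 / 2 := by
      intro i τ hτ
      have : dist (τ • w₀) ((i : ℝ) • w₀) < (R i i.2 : ℝ) / 2 := hτ
      rw [dist_eq_norm] at this
      have h2 : ((R i i.2 / 2 : ℝ≥0) : ℝ) = (R i i.2 : ℝ) / 2 := by push_cast; ring
      exact le_of_lt (by rw [← NNReal.coe_lt_coe, coe_nnnorm, h2]; exact this)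
    -- uniform radius and constant
    set ρ : ℝ≥0 := t.inf' htne (fun i => R i i.2 / 2) with hρ
    have hρpos : 0 < ρ := by
      rw [hρ, Finset.lt_inf'_iff]
      intro i _
      exact half_pos (hR0 i i.2)
    have hρle : ∀ i ∈ t, ρ ≤ R i i.2 / 2 := fun i hi => Finset.inf'_le _ hi
    choose Cb hCb using fun i : ι => changeOrigin_uniform_bound (P i i.2) (R i i.2) (hRrad i i.2)
    set C : ℝ≥0 := ∑ i ∈ t, Cb i with hC
    -- disjointified pieces
    set W : ι → Set ℝ := fun i => V i ∩ ⋂ j ∈ t.filter (· < i), (V j)ᶜ with hW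
    have hWmeas : ∀ i, MeasurableSet (W i) := by
      intro i
      refine ((hVopen i).measurableSet).inter ?_
      exact MeasurableSet.biInter (t.filter (· < i)).countable_toSet
        (fun j _ => (hVopen j).measurableSet.compl)
    have hWsub : ∀ i, W i ⊆ V i := fun i => Set.inter_subset_left
    have hWchoice : ∀ τ ∈ Set.Icc (0:ℝ) 1, ∃ i ∈ t, τ ∈ W i ∧
        ∀ j ∈ t, j ≠ i → τ ∉ W j := by
      intro τ hτ
      set s := t.filter (fun j => τ ∈ V j) with hs
      have hsne : s.Nonempty := by
        obtain ⟨i, hi, hτi⟩ := Set.mem_iUnion₂.1 (ht hτ)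
        exact ⟨i, Finset.mem_filter.2 ⟨hi, hτi⟩⟩
      set i := s.min' hsne with hi
      have hit : i ∈ s := s.min'_mem hsne
      have hit' : i ∈ t := (Finset.mem_filter.1 hit).1
      have hiV : τ ∈ V i := (Finset.mem_filter.1 hit).2
      have hiW : τ ∈ W i := by
        refine ⟨hiV, ?_⟩
        simp only [Set.mem_iInter, Set.mem_compl_iff]
        intro j hj
        obtain ⟨hjt, hji⟩ := Finset.mem_filter.1 hj
        intro hτj
        exact absurd (s.min'_le j (Finset.mem_filter.2 ⟨hjt, hτj⟩)) (not_le.2 hji)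
      refine ⟨i, hit', hiW, fun j hjt hji hτj => ?_⟩
      have hij : i < j := lt_of_le_of_ne (s.min'_le j (Finset.mem_filter.2 ⟨hjt, hτj.1⟩))
        (fun h => hji h.symm)
      have := hτj.2
      simp only [Set.mem_iInter, Set.mem_compl_iff] at this
      exact this i (Finset.mem_filter.2 ⟨hit', hij⟩) hiV
    -- the measurable family of power series
    set q : ℝ → FormalMultilinearSeries ℝ X Y := fun τ n =>
      ∑ i ∈ t, Set.indicator (W i)
        (fun σ => (P i i.2).changeOrigin (σ • w₀ - (i : ℝ) • w₀) n) τ with hq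
    have hqeq : ∀ τ ∈ Set.Icc (0:ℝ) 1, ∃ i ∈ t, τ ∈ W i ∧
        q τ = (P i i.2).changeOrigin (τ • w₀ - (i : ℝ) • w₀) := by
      intro τ hτ
      obtain ⟨i, hit, hiW, huniq⟩ := hWchoice τ hτ
      refine ⟨i, hit, hiW, ?_⟩
      funext n
      simp only [hq]
      rw [Finset.sum_eq_single i]
      · exact Set.indicator_of_mem hiW _
      · intro j hjt hji
        exact Set.indicator_of_notMem (huniq j hjt hji) _
      · intro h; exact absurd hit h
    -- (F1): power series for A at each point of the segment with uniform radius
    have hF1 : ∀ τ ∈ Set.Icc (0:ℝ) 1,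
        HasFPowerSeriesOnBall A (q τ) (τ • w₀) ρ := by
      intro τ hτ
      obtain ⟨i, hit, hiW, hqτ⟩ := hqeq τ hτ
      rw [hqτ]
      have hz := hVmem i τ (hWsub i hiW)
      have hzlt : (‖τ • w₀ - (i : ℝ) • w₀‖₊ : ℝ≥0∞) < R i i.2 := by
        have : (‖τ • w₀ - (i : ℝ) • w₀‖₊ : ℝ≥0∞) ≤ (R i i.2 / 2 : ℝ≥0) := by
          exact_mod_cast hz
        refine lt_of_le_of_lt this ?_
        exact_mod_cast NNReal.half_lt_self (hR0 i i.2).ne'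
      have hball := (hRball i i.2).changeOrigin hzlt
      rw [add_sub_cancel] at hball
      refine hball.mono (by exact_mod_cast hρpos) ?_
      -- ρ ≤ R i - ‖z‖
      have h1 : (ρ : ℝ≥0∞) ≤ (R i i.2 / 2 : ℝ≥0) := by exact_mod_cast hρle i hit
      refine h1.trans ?_
      have hhalf : R i i.2 - R i i.2 / 2 = R i i.2 / 2 := by
        rw [tsub_eq_iff_eq_add_of_le (NNReal.half_le_self _)]
        exact (add_halves _).symm
      calc ((R i i.2 / 2 : ℝ≥0) : ℝ≥0∞)
          = (R i i.2 : ℝ≥0∞) - ((R i i.2 / 2 : ℝ≥0) : ℝ≥0∞) := by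
            rw [← ENNReal.coe_sub, hhalf]
        _ ≤ (R i i.2 : ℝ≥0∞) - ‖τ • w₀ - (i : ℝ) • w₀‖₊ :=
            tsub_le_tsub_left (show (‖τ • w₀ - (i : ℝ) • w₀‖₊ : ℝ≥0∞)
              ≤ ((R i i.2 / 2 : ℝ≥0) : ℝ≥0∞) by exact_mod_cast hz) _
    -- (F2): uniform coefficient bounds, valid for every τ
    have hF2 : ∀ τ : ℝ, ∀ n : ℕ, ‖q τ n‖₊ * ρ ^ n ≤ C := by
      intro τ n
      rw [hq]
      calc ‖∑ i ∈ t, Set.indicator (W i)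
            (fun σ => (P i i.2).changeOrigin (σ • w₀ - (i : ℝ) • w₀) n) τ‖₊ * ρ ^ n
          ≤ (∑ i ∈ t, ‖Set.indicator (W i)
            (fun σ => (P i i.2).changeOrigin (σ • w₀ - (i : ℝ) • w₀) n) τ‖₊) * ρ ^ n := by
            exact mul_le_mul_left (nnnorm_sum_le _ _) _
        _ = ∑ i ∈ t, ‖Set.indicator (W i)
            (fun σ => (P i i.2).changeOrigin (σ • w₀ - (i : ℝ) • w₀) n) τ‖₊ * ρ ^ n := by
            rw [Finset.sum_mul]
        _ ≤ ∑ i ∈ t, Cb i := by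
            refine Finset.sum_le_sum fun i hi => ?_
            by_cases hτi : τ ∈ W i
            · rw [Set.indicator_of_mem hτi]
              have hz := hVmem i τ (hWsub i hτi)
              calc ‖(P i i.2).changeOrigin (τ • w₀ - (i : ℝ) • w₀) n‖₊ * ρ ^ n
                  ≤ ‖(P i i.2).changeOrigin (τ • w₀ - (i : ℝ) • w₀) n‖₊ * (R i i.2 / 2) ^ n :=
                    mul_le_mul_right (pow_le_pow_left' (hρle i hi) n) _
                _ ≤ Cb i := hCb i _ hz n
            · rw [Set.indicator_of_notMem hτi]
              simp
        _ = C := hC.symm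
    -- real-valued coefficient bound
    have hF2' : ∀ τ : ℝ, ∀ n : ℕ, ‖q τ n‖ ≤ (C : ℝ) / (ρ : ℝ) ^ n := by
      intro τ n
      rw [le_div_iff₀ (by positivity)]
      exact_mod_cast hF2 τ n
    -- (F3): measurability
    have hF3 : ∀ n : ℕ, AEStronglyMeasurable (fun τ => q τ n)
        (volume.restrict (Set.Ioc (0:ℝ) 1)) := by
      intro n
      rw [hq]
      refine Finset.aestronglyMeasurable_fun_sum t fun i _ => ?_
      rw [aestronglyMeasurable_indicator_iff (hWmeas i)]
      have hrad : 0 < (P i i.2).radius := lt_of_le_of_lt zero_le (hRrad i i.2)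
      have hcont : ContinuousOn (fun σ : ℝ => (P i i.2).changeOrigin (σ • w₀ - (i : ℝ) • w₀) n)
          (V i) := by
        have h1 := ((P i i.2).hasFPowerSeriesOnBall_changeOrigin n hrad).continuousOn
        refine h1.comp ((continuous_id.smul continuous_const).sub continuous_const).continuousOn ?_
        intro σ hσ
        have := hVmem i σ hσ
        show ((fun σ : ℝ => σ • w₀ - (i : ℝ) • w₀) σ) ∈ _
        simp only
        rw [EMetric.mem_ball, edist_zero_right, enorm_eq_nnnorm]
        refine lt_of_le_of_lt (show (‖σ • w₀ - (i : ℝ) • w₀‖₊ : ℝ≥0∞)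
            ≤ ((R i i.2 / 2 : ℝ≥0) : ℝ≥0∞) by exact_mod_cast this) ?_
        refine lt_of_le_of_lt ?_ (hRrad i i.2)
        exact_mod_cast NNReal.half_le_self _
      have := (hcont.mono (hWsub i)).aestronglyMeasurable (μ := volume) (hWmeas i)
      refine this.mono_measure ?_
      rw [Measure.restrict_restrict (hWmeas i)]
      exact Measure.restrict_mono Set.inter_subset_left le_rfl
    -- The coefficient integrals
    set Q : FormalMultilinearSeries ℝ X Y := fun n =>
      ∫ τ in Set.Ioc (0:ℝ) 1, (f τ * τ ^ n) • q τ n with hQ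
    have hQint : ∀ n : ℕ, Integrable (fun τ => (f τ * τ ^ n) • q τ n)
        (volume.restrict (Set.Ioc (0:ℝ) 1)) := by
      intro n
      refine Integrable.mono' ((hf1.norm.const_mul ((C : ℝ) / (ρ : ℝ) ^ n))) ?_ ?_
      · exact (hf1.1.mul (continuous_pow n).aestronglyMeasurable).smul (hF3 n)
      · filter_upwards [ae_restrict_mem measurableSet_Ioc] with τ hτ
        have hns := norm_smul (f τ * τ ^ n) (q τ n)
        rw [hns]
        have hτ1 : |τ| ≤ 1 := by
          rw [abs_le]; exact ⟨by linarith [hτ.1], hτ.2⟩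
        calc ‖f τ * τ ^ n‖ * ‖q τ n‖ ≤ (‖f τ‖ * 1) * ((C : ℝ) / (ρ : ℝ) ^ n) := by
              refine mul_le_mul ?_ (hF2' τ n) (norm_nonneg _) (by positivity)
              rw [norm_mul]
              refine mul_le_mul_of_nonneg_left ?_ (norm_nonneg _)
              rw [norm_pow, Real.norm_eq_abs]
              exact pow_le_one₀ (abs_nonneg _) hτ1
          _ = (C : ℝ) / (ρ : ℝ) ^ n * ‖f τ‖ := by ring
    -- norm bound on the integrals
    set I : ℝ := ∫ τ in Set.Ioc (0:ℝ) 1, ‖f τ‖ with hI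
    have hInn : 0 ≤ I := integral_nonneg fun τ => norm_nonneg _
    have hQbound : ∀ n : ℕ, ‖Q n‖ ≤ ((C : ℝ) / (ρ : ℝ) ^ n) * I := by
      intro n
      rw [hQ]
      refine (norm_integral_le_integral_norm _).trans ?_
      have : ∀ᵐ τ ∂(volume.restrict (Set.Ioc (0:ℝ) 1)),
          ‖(f τ * τ ^ n) • q τ n‖ ≤ ((C : ℝ) / (ρ : ℝ) ^ n) * ‖f τ‖ := by
        filter_upwards [ae_restrict_mem measurableSet_Ioc] with τ hτ
        have hns := norm_smul (f τ * τ ^ n) (q τ n)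
        rw [hns]
        have hτ1 : |τ| ≤ 1 := by
          rw [abs_le]; exact ⟨by linarith [hτ.1], hτ.2⟩
        calc ‖f τ * τ ^ n‖ * ‖q τ n‖ ≤ (‖f τ‖ * 1) * ((C : ℝ) / (ρ : ℝ) ^ n) := by
              refine mul_le_mul ?_ (hF2' τ n) (norm_nonneg _) (by positivity)
              rw [norm_mul]
              refine mul_le_mul_of_nonneg_left ?_ (norm_nonneg _)
              rw [norm_pow, Real.norm_eq_abs]
              exact pow_le_one₀ (abs_nonneg _) hτ1
          _ = (C : ℝ) / (ρ : ℝ) ^ n * ‖f τ‖ := by ring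
      calc (∫ τ in Set.Ioc (0:ℝ) 1, ‖(f τ * τ ^ n) • q τ n‖)
          ≤ ∫ τ in Set.Ioc (0:ℝ) 1, ((C : ℝ) / (ρ : ℝ) ^ n) * ‖f τ‖ :=
            integral_mono_ae (hQint n).norm (hf1.norm.const_mul _) this
        _ = ((C : ℝ) / (ρ : ℝ) ^ n) * I := by rw [integral_const_mul]
    -- radius bound
    have hQrad : (ρ : ℝ≥0∞) ≤ Q.radius := by
      refine Q.le_radius_of_bound ((C : ℝ) * I) fun n => ?_
      calc ‖Q n‖ * (ρ : ℝ) ^ n ≤ (((C : ℝ) / (ρ : ℝ) ^ n) * I) * (ρ : ℝ) ^ n :=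
            mul_le_mul_of_nonneg_right (hQbound n) (by positivity)
        _ = (C : ℝ) * I := by
            field_simp
    -- the power series representation
    have hball : HasFPowerSeriesOnBall Φ Q w₀ ρ := by
      refine ⟨hQrad, by exact_mod_cast hρpos, ?_⟩
      intro h hy
      rw [EMetric.mem_ball, edist_zero_right, enorm_eq_nnnorm] at hy
      have hyρ : ‖h‖₊ < ρ := ENNReal.coe_lt_coe.1 hy
      set F : ℕ → ℝ → Y := fun n τ => (f τ * τ ^ n) • (q τ n fun _ => h) with hF
      -- each F n is integrable
      have hFint : ∀ n, Integrable (F n) (volume.restrict (Set.Ioc (0:ℝ) 1)) := by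
        intro n
        have := (ContinuousMultilinearMap.apply ℝ (fun _ : Fin n => X) Y
          (fun _ => h)).integrable_comp (hQint n)
        refine this.congr ?_
        filter_upwards with τ
        simp [hF]
      -- pointwise identity on (0,1]
      have hptw : ∀ τ ∈ Set.Ioc (0:ℝ) 1, (∑' n, F n τ) = f τ • A (τ • (w₀ + h)) := by
        intro τ hτ
        have hτI : τ ∈ Set.Icc (0:ℝ) 1 := Set.Ioc_subset_Icc_self hτ
        have hmem : τ • h ∈ EMetric.ball (0 : X) ρ := by
          show edist (τ • h) (0 : X) < (ρ : ℝ≥0∞)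
          rw [edist_zero_right, enorm_eq_nnnorm]
          have : ‖τ • h‖₊ ≤ ‖h‖₊ := by
            rw [nnnorm_smul]
            have hτle : ‖τ‖₊ ≤ 1 := by
              rw [← NNReal.coe_le_coe, coe_nnnorm, Real.norm_eq_abs, NNReal.coe_one, abs_le]
              exact ⟨by linarith [hτ.1], hτ.2⟩
            calc ‖τ‖₊ * ‖h‖₊ ≤ 1 * ‖h‖₊ := mul_le_mul_left hτle _
              _ = ‖h‖₊ := one_mul _
          exact lt_of_le_of_lt (ENNReal.coe_le_coe.2 this) (ENNReal.coe_lt_coe.2 hyρ)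
        have hsum := (hF1 τ hτI).hasSum hmem
        have hdiag : ∀ n, q τ n (fun _ => τ • h) = τ ^ n • (q τ n fun _ => h) := by
          intro n
          have := (q τ n).map_smul_univ (fun _ : Fin n => τ) (fun _ => h)
          simpa using this
        have hsum2 : HasSum (fun n => F n τ) (f τ • A (τ • (w₀ + h))) := by
          have h2 := hsum.const_smul (f τ)
          have heq : (fun n => F n τ) = fun n => f τ • q τ n (fun _ => τ • h) := by
            funext n
            simp only [hF]
            rw [hdiag n, mul_smul]
          rw [heq, smul_add]
          exact h2
        exact hsum2.tsum_eq
      -- summability of integrals of norms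
      have hxlt : ‖h‖ / (ρ : ℝ) < 1 := by
        rw [div_lt_one (by exact_mod_cast hρpos)]
        exact_mod_cast hyρ
      have hFbound : ∀ n, ∀ τ ∈ Set.Ioc (0:ℝ) 1,
          ‖F n τ‖ ≤ ((C : ℝ) * (‖h‖ / (ρ : ℝ)) ^ n) * ‖f τ‖ := by
        intro n τ hτ
        have hτ1 : |τ| ≤ 1 := by
          rw [abs_le]; exact ⟨by linarith [hτ.1], hτ.2⟩
        rw [hF, norm_smul]
        calc ‖f τ * τ ^ n‖ * ‖q τ n fun _ => h‖
            ≤ (‖f τ‖ * 1) * (((C : ℝ) / (ρ : ℝ) ^ n) * ‖h‖ ^ n) := by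
              refine mul_le_mul ?_ ?_ (norm_nonneg _) (by positivity)
              · rw [norm_mul]
                refine mul_le_mul_of_nonneg_left ?_ (norm_nonneg _)
                rw [norm_pow, Real.norm_eq_abs]
                exact pow_le_one₀ (abs_nonneg _) hτ1
              · calc ‖q τ n fun _ => h‖ ≤ ‖q τ n‖ * ∏ _i : Fin n, ‖h‖ :=
                      (q τ n).le_opNorm _
                  _ = ‖q τ n‖ * ‖h‖ ^ n := by
                      rw [Finset.prod_const, Finset.card_univ, Fintype.card_fin]
                  _ ≤ ((C : ℝ) / (ρ : ℝ) ^ n) * ‖h‖ ^ n :=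
                      mul_le_mul_of_nonneg_right (hF2' τ n) (by positivity)
          _ = ((C : ℝ) * (‖h‖ / (ρ : ℝ)) ^ n) * ‖f τ‖ := by
              rw [div_pow]
              ring
      have hFnormint : ∀ n, (∫ τ in Set.Ioc (0:ℝ) 1, ‖F n τ‖)
          ≤ ((C : ℝ) * (‖h‖ / (ρ : ℝ)) ^ n) * I := by
        intro n
        calc (∫ τ in Set.Ioc (0:ℝ) 1, ‖F n τ‖)
            ≤ ∫ τ in Set.Ioc (0:ℝ) 1, ((C : ℝ) * (‖h‖ / (ρ : ℝ)) ^ n) * ‖f τ‖ := by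
              refine integral_mono_ae (hFint n).norm (hf1.norm.const_mul _) ?_
              filter_upwards [ae_restrict_mem measurableSet_Ioc] with τ hτ
              exact hFbound n τ hτ
          _ = ((C : ℝ) * (‖h‖ / (ρ : ℝ)) ^ n) * I := by rw [integral_const_mul]
      have hsummable : Summable (fun n => ∫ τ in Set.Ioc (0:ℝ) 1, ‖F n τ‖) := by
        refine Summable.of_nonneg_of_le
          (fun n => integral_nonneg fun τ => norm_nonneg _) hFnormint ?_
        exact (((summable_geometric_of_lt_one (by positivity) hxlt).mul_left
          (C : ℝ)).mul_right I)
      have hHasSum := hasSum_integral_of_summable_integral_norm hFint hsummable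
      have hQapp : ∀ n, (∫ τ in Set.Ioc (0:ℝ) 1, F n τ) = Q n (fun _ => h) := by
        intro n
        have hcomm := (ContinuousMultilinearMap.apply ℝ (fun _ : Fin n => X) Y
          (fun _ => h)).integral_comp_comm (hQint n)
        simp only [ContinuousMultilinearMap.apply_apply, _root_.map_smul] at hcomm
        simp only [hF, hQ]
        exact hcomm
      have htsum : (∫ τ in Set.Ioc (0:ℝ) 1, ∑' n, F n τ) = Φ (w₀ + h) := by
        rw [hΦ]
        exact setIntegral_congr_fun measurableSet_Ioc hptw
      have final := hHasSum
      rw [htsum] at final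
      have : (fun n => ∫ τ in Set.Ioc (0:ℝ) 1, F n τ) = fun n => Q n (fun _ => h) := by
        funext n; exact hQapp n
      rwa [this] at final
    exact hball.analyticAt
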